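/- arXiv:1307.5473 — 3 statements merged into one kernel-verified Lean document; each statement's English description precedes it below -/
import Mathlib

section
/- Suppose a, b satisfy the system (Δ + ñ² − λ²)a = μ·b-type coupled equations reduced on a μ-eigenspace of Δ restricted to k-forms: if ((Δ + (ñ−1)² − λ²)(Δ + ñ² − λ²) − Δ)a = 0 with Δa = μ a and a ≠ 0, then λ ∈ { ±1/2 ± √((k − f/2 − 1/2)² + μ) }, where ñ = k − f/2. -/
/-- Indicial root computation: if `((Δ + (ñ−1)² − λ²)(Δ + ñ² − λ²) − Δ) a = 0` on a
`μ`-eigenspace of `Δ` restricted to `k`-forms (with `ñ = k − f/2`) and `a ≠ 0`, then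
`λ ∈ { ±1/2 ± √((k − f/2 − 1/2)² + μ) }`. -/
theorem stmt3 {V : Type*} [AddCommGroup V] [Module ℝ V]
    (k f μ lam : ℝ) (hμ : 0 ≤ μ) (a : V) (ha : a ≠ 0)
    (h : ((μ + (k - f / 2 - 1) ^ 2 - lam ^ 2) * (μ + (k - f / 2) ^ 2 - lam ^ 2) - μ) • a = 0) :
    lam = 1 / 2 + Real.sqrt ((k - f / 2 - 1 / 2) ^ 2 + μ) ∨
    lam = 1 / 2 - Real.sqrt ((k - f / 2 - 1 / 2) ^ 2 + μ) ∨
    lam = -(1 / 2) + Real.sqrt ((k - f / 2 - 1 / 2) ^ 2 + μ) ∨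
    lam = -(1 / 2) - Real.sqrt ((k - f / 2 - 1 / 2) ^ 2 + μ) := by
  set r := Real.sqrt ((k - f / 2 - 1 / 2) ^ 2 + μ) with hrdef
  have hr : r ^ 2 = (k - f / 2 - 1 / 2) ^ 2 + μ :=
    Real.sq_sqrt (by positivity)
  have hc : (μ + (k - f / 2 - 1) ^ 2 - lam ^ 2) * (μ + (k - f / 2) ^ 2 - lam ^ 2) - μ = 0 := by
    rcases smul_eq_zero.mp h with h' | h'
    · exact h'
    · exact absurd h' ha
  have hprod : (lam - (1 / 2 + r)) * (lam - (1 / 2 - r)) * (lam - (-(1 / 2) + r)) *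
      (lam - (-(1 / 2) - r)) = 0 := by
    linear_combination hc + (r ^ 2 + ((k - f / 2 - 1 / 2) ^ 2 + μ)
      - (lam - 1 / 2) ^ 2 - (lam + 1 / 2) ^ 2) * hr
  rcases mul_eq_zero.mp hprod with h1 | h4
  · rcases mul_eq_zero.mp h1 with h2 | h3
    · rcases mul_eq_zero.mp h2 with h5 | h6
      · exact Or.inl (by linarith)
      · exact Or.inr (Or.inl (by linarith))
    · exact Or.inr (Or.inr (Or.inl (by linarith)))
  · exact Or.inr (Or.inr (Or.inr (by linarith)))
end

section
/- Let f be odd and suppose every eigenvalue μ of the Laplacian on j-forms of the link with |j − f/2| = 1/2 satisfies μ ∉ (0, 1). Then every number of the form −f/2 ± 1/2 ± √((k − f/2 ± 1/2)² + μ) with μ > 0, and every number −k or k − f with k an integer, lying in [−f/2 − 1/2, −f/2 + 1/2], must equal −f/2 + 1/2 or −f/2 − 1/2. -/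
/-- Suitable scaling, odd-dimensional link: if every Laplace eigenvalue `μ` on `j`-forms
with `|j − f/2| = 1/2` avoids `(0, 1)`, then every number of the form
`−f/2 ± 1/2 ± √((k − f/2 ± 1/2)² + μ)` with `μ > 0`, and every number `−k` or `k − f`
with `k` an integer, lying in `[−f/2 − 1/2, −f/2 + 1/2]` must equal `−f/2 ± 1/2`. -/
theorem stmt5 (f : ℕ) (hf : Odd f) (Spec : ℤ → Set ℝ)
    (hgap : ∀ j : ℤ, |(j : ℝ) - f / 2| = 1 / 2 → ∀ μ ∈ Spec j, ¬(0 < μ ∧ μ < 1)) :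
    (∀ k : ℤ, ∀ μ ∈ Spec k, 0 < μ →
      ∀ ε₁ ε₂ ε₃ : ℝ, (ε₁ = 1 ∨ ε₁ = -1) → (ε₂ = 1 ∨ ε₂ = -1) → (ε₃ = 1 ∨ ε₃ = -1) →
        ∀ ζ : ℝ,
          ζ = -(f : ℝ) / 2 + ε₁ / 2 + ε₂ * Real.sqrt (((k : ℝ) - f / 2 + ε₃ / 2) ^ 2 + μ) →
          ζ ∈ Set.Icc (-(f : ℝ) / 2 - 1 / 2) (-(f : ℝ) / 2 + 1 / 2) →
          (ζ = -(f : ℝ) / 2 + 1 / 2 ∨ ζ = -(f : ℝ) / 2 - 1 / 2)) ∧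
    (∀ k : ℤ, ∀ ζ : ℝ, (ζ = -(k : ℝ) ∨ ζ = (k : ℝ) - f) →
      ζ ∈ Set.Icc (-(f : ℝ) / 2 - 1 / 2) (-(f : ℝ) / 2 + 1 / 2) →
      (ζ = -(f : ℝ) / 2 + 1 / 2 ∨ ζ = -(f : ℝ) / 2 - 1 / 2)) := by
  obtain ⟨m, hm⟩ := hf
  have hfR : (f : ℝ) = 2 * m + 1 := by rw [hm]; push_cast; ring
  constructor
  · rintro k μ hμmem hμ ε₁ ε₂ ε₃ hε₁ hε₂ hε₃ ζ hζ ⟨h1, h2⟩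
    have hs0 : (0:ℝ) ≤ ((k : ℝ) - f / 2 + ε₃ / 2) ^ 2 + μ := by positivity
    set s := Real.sqrt (((k : ℝ) - f / 2 + ε₃ / 2) ^ 2 + μ) with hsd
    have hs : s ^ 2 = ((k : ℝ) - f / 2 + ε₃ / 2) ^ 2 + μ := Real.sq_sqrt hs0
    have hsnn : 0 ≤ s := Real.sqrt_nonneg _
    have hint : ∃ n : ℤ, (k : ℝ) - f / 2 + ε₃ / 2 = n := by
      rcases hε₃ with h | h
      · exact ⟨k - m, by rw [h, hfR]; push_cast; ring⟩
      · exact ⟨k - m - 1, by rw [h, hfR]; push_cast; ring⟩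
    obtain ⟨n, hn⟩ := hint
    rcases eq_or_ne n 0 with h0 | h0
    · have ha0 : (k : ℝ) - f / 2 + ε₃ / 2 = 0 := by rw [hn, h0]; norm_num
      have habs : |(k : ℝ) - f / 2| = 1 / 2 := by
        have hk : (k : ℝ) - f / 2 = -ε₃ / 2 := by linarith
        rcases hε₃ with h | h <;> rw [hk, h] <;> norm_num
      have hnot := hgap k habs μ hμmem
      have hμ1 : 1 ≤ μ := le_of_not_gt fun h => hnot ⟨hμ, h⟩
      have hs1 : 1 ≤ s := by nlinarith [hs, hsnn, ha0]
      rcases hε₁ with rfl | rfl <;> rcases hε₂ with rfl | rfl <;>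
        rw [hζ] at h1 h2 ⊢
      · exfalso; linarith
      · right; linarith
      · left; linarith
      · exfalso; linarith
    · have hn1 : (1:ℤ) ≤ n ^ 2 := by
        nlinarith [Int.one_le_abs h0, sq_abs n, abs_nonneg n]
      have hn1R : (1:ℝ) ≤ ((k : ℝ) - f / 2 + ε₃ / 2) ^ 2 := by
        rw [hn]; exact_mod_cast hn1
      have hs1 : 1 < s := by nlinarith [hs, hsnn]
      rcases hε₁ with rfl | rfl <;> rcases hε₂ with rfl | rfl <;>
        rw [hζ] at h1 h2 <;> exfalso <;> linarith
  · rintro k ζ hζ ⟨h1, h2⟩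
    obtain ⟨n, rfl⟩ : ∃ n : ℤ, ζ = (n : ℝ) := by
      rcases hζ with rfl | rfl
      · exact ⟨-k, by push_cast; ring⟩
      · exact ⟨k - f, by push_cast; ring⟩
    rw [hfR] at h1 h2 ⊢
    have hle1 : (-(m:ℤ) - 1 : ℤ) ≤ n := by exact_mod_cast (by push_cast; linarith : ((-(m:ℤ) - 1 : ℤ) : ℝ) ≤ n)
    have hle2 : n ≤ (-(m:ℤ) : ℤ) := by exact_mod_cast (by push_cast; linarith : ((n:ℝ) ≤ ((-(m:ℤ) : ℤ) : ℝ)))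
    have : n = -(m:ℤ) ∨ n = -(m:ℤ) - 1 := by omega
    rcases this with rfl | rfl
    · left; push_cast; ring
    · right; push_cast; ring
end

section
/- Let (D, d) be a Hilbert complex: d a closed densely defined operator on a Hilbert space H with d(D(d) ) ⊆ D(d) and d² = 0 on D(d). Let δ = d* be its adjoint. If the associated operator d + δ with domain D(d) ∩ D(δ) is Fredholm, then H decomposes orthogonally as H = 𝓗 ⊕ closure(ran d) ⊕ closure(ran δ) with 𝓗 = ker d ∩ ker δ finite-dimensional, the ranges of d and δ are closed, and the cohomology ker d / ran d is isomorphic to 𝓗. -/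
open Submodule LinearMap

private lemma aux_flip {E : Type*} [NormedAddCommGroup E] [InnerProductSpace ℂ E]
    {U V : Submodule ℂ E} (h : U ≤ Vᗮ) : V ≤ Uᗮ := by
  intro v hv
  rw [Submodule.mem_orthogonal]
  intro u hu
  exact inner_eq_zero_symm.mp ((Submodule.mem_orthogonal V u).1 (h hu) v hv)

private lemma aux_sup_closed {E : Type*} [NormedAddCommGroup E] [InnerProductSpace ℂ E]
    (U V : Submodule ℂ E) [HasOrthogonalProjection U] [HasOrthogonalProjection V]
    (h : V ≤ Uᗮ) : IsClosed ((U ⊔ V : Submodule ℂ E) : Set E) := by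
  have hUV : U ≤ Vᗮ := aux_flip h
  have key : ((U ⊔ V : Submodule ℂ E) : Set E) =
      {x : E | (orthogonalProjection U x : E) + (orthogonalProjection V x : E) = x} := by
    ext x
    constructor
    · intro hx
      obtain ⟨u, hu, v, hv, rfl⟩ := Submodule.mem_sup.1 hx
      have h1 : ((orthogonalProjection U (u + v)) : E) = u := by
        rw [map_add, Submodule.orthogonalProjectionOnto_apply_of_mem_orthogonal (h hv)]
        rw [add_zero]
        exact Submodule.starProjection_eq_self_iff.2 hu
      have h2 : ((orthogonalProjection V (u + v)) : E) = v := by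
        rw [map_add, Submodule.orthogonalProjectionOnto_apply_of_mem_orthogonal (hUV hu)]
        rw [zero_add]
        exact Submodule.starProjection_eq_self_iff.2 hv
      show _ = _
      rw [h1, h2]
    · intro hx
      have : (orthogonalProjection U x : E) + (orthogonalProjection V x : E) ∈ U ⊔ V :=
        Submodule.add_mem_sup (SetLike.coe_mem _) (SetLike.coe_mem _)
      rwa [hx] at this
  rw [key]
  have hc : Continuous fun x : E =>
      (orthogonalProjection U x : E) + (orthogonalProjection V x : E) :=
    ((continuous_subtype_val.comp (orthogonalProjection U).continuous).add
      (continuous_subtype_val.comp (orthogonalProjection V).continuous))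
  exact isClosed_eq hc continuous_id

private lemma aux_closed_sup_findim {E : Type*} [NormedAddCommGroup E] [InnerProductSpace ℂ E]
    [CompleteSpace E] (U V : Submodule ℂ E) (hU : IsClosed (U : Set E))
    [FiniteDimensional ℂ V] : IsClosed ((U ⊔ V : Submodule ℂ E) : Set E) := by
  haveI := hU.completeSpace_coe
  let T : E →ₗ[ℂ] E := LinearMap.id - U.subtype.comp (orthogonalProjection U).toLinearMap
  have hT : ∀ x : E, T x = x - (orthogonalProjection U x : E) := fun x => rfl
  let V' := Submodule.map T V
  haveI : FiniteDimensional ℂ V' := Module.Finite.map V T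
  have hV' : V' ≤ Uᗮ := by
    rintro _ ⟨v, hv, rfl⟩
    rw [hT]
    exact Submodule.sub_starProjection_mem_orthogonal v
  have hsup : U ⊔ V = U ⊔ V' := by
    apply le_antisymm
    · refine sup_le le_sup_left fun v hv => ?_
      have : v = (orthogonalProjection U v : E) + T v := by rw [hT]; abel
      rw [this]
      exact Submodule.add_mem _ (Submodule.mem_sup_left (SetLike.coe_mem _))
        (Submodule.mem_sup_right ⟨v, hv, rfl⟩)
    · refine sup_le le_sup_left ?_
      rintro _ ⟨v, hv, rfl⟩
      rw [hT]
      exact Submodule.sub_mem _ (Submodule.mem_sup_right hv)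
        (Submodule.mem_sup_left (SetLike.coe_mem _))
  rw [hsup]
  exact aux_sup_closed U V' hV'

private lemma aux_lift {K V W : Type*} [Field K] [AddCommGroup V] [Module K V]
    [AddCommGroup W] [Module K W] (f : V →ₗ[K] W) (p : Submodule K V)
    [FiniteDimensional K (Submodule.map f p)] :
    ∃ F : Submodule K V, F ≤ p ∧ FiniteDimensional K F ∧ Submodule.map f F = Submodule.map f p := by
  classical
  obtain ⟨S, hS⟩ := (Submodule.fg_iff_finiteDimensional (Submodule.map f p)).2 ‹_›
  set g : W → V := fun x => if h : ∃ y ∈ p, f y = x then h.choose else 0 with hg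
  have hgood : ∀ x ∈ Submodule.map f p, g x ∈ p ∧ f (g x) = x := by
    intro x hx
    obtain ⟨y, hy, hfy⟩ := hx
    have h : ∃ y ∈ p, f y = x := ⟨y, hy, hfy⟩
    rw [hg]
    simp only [dif_pos h]
    exact ⟨h.choose_spec.1, h.choose_spec.2⟩
  have hSmem : ∀ x ∈ (S : Set W), x ∈ Submodule.map f p := fun x hx =>
    hS ▸ Submodule.subset_span hx
  refine ⟨Submodule.span K (g '' S), ?_, ?_, ?_⟩
  · rw [Submodule.span_le]
    rintro _ ⟨x, hx, rfl⟩
    exact (hgood x (hSmem x hx)).1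
  · exact FiniteDimensional.span_of_finite K ((S.finite_toSet).image g)
  · rw [Submodule.map_span, ← Set.image_comp]
    have : (f ∘ g) '' (S : Set W) = (S : Set W) := by
      apply Set.image_congr (fun x hx => (hgood x (hSmem x hx)).2) |>.trans (Set.image_id _)
    rw [this, hS]

private lemma aux_closed_range {E : Type*} [NormedAddCommGroup E] [InnerProductSpace ℂ E]
    [CompleteSpace E] (R RL : Submodule ℂ E) (hRL : IsClosed (RL : Set E))
    [FiniteDimensional ℂ (E ⧸ RL)]
    (hkey : R.topologicalClosure ⊓ RL ≤ R) : IsClosed (R : Set E) := by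
  set C := R.topologicalClosure with hC
  have hRC : R ≤ C := Submodule.le_topologicalClosure R
  set E0 := C ⊓ RL with hE0
  have hE0closed : IsClosed (E0 : Set E) := by
    have : (E0 : Set E) = (C : Set E) ∩ (RL : Set E) := rfl
    rw [this]
    exact R.isClosed_topologicalClosure.inter hRL
  obtain ⟨F, hFR, hFfin, hFmap⟩ := aux_lift RL.mkQ R
  have hReq : R = E0 ⊔ F := by
    apply le_antisymm
    · intro y hy
      have : RL.mkQ y ∈ Submodule.map RL.mkQ F := hFmap ▸ ⟨y, hy, rfl⟩
      obtain ⟨fv, hfv, hfveq⟩ := this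
      have hyf : y - fv ∈ RL := by
        have h0 : RL.mkQ (y - fv) = 0 := by rw [map_sub, hfveq, sub_self]
        rwa [Submodule.mkQ_apply, Submodule.Quotient.mk_eq_zero] at h0
      have hyfC : y - fv ∈ C := Submodule.sub_mem _ (hRC hy) (hRC (hFR hfv))
      have : y = (y - fv) + fv := by abel
      rw [this]
      exact Submodule.add_mem _ (Submodule.mem_sup_left ⟨hyfC, hyf⟩)
        (Submodule.mem_sup_right hfv)
    · exact sup_le hkey hFR
  rw [hReq]
  haveI := hFfin
  exact aux_closed_sup_findim E0 F hE0closed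

set_option maxHeartbeats 800000 in
/-- Abstract Kodaira decomposition / Hodge theorem for a Fredholm Hilbert complex
(Brüning–Lesch): for a closed densely defined `d` with `d² = 0` and adjoint `δ`, if the
operator `L = d + δ` on `D(d) ∩ D(δ)` is Fredholm, then the harmonic space
`𝓗 = ker d ∩ ker δ` is finite-dimensional, the ranges of `d` and `δ` are closed,
`H = 𝓗 ⊕ ran d ⊕ ran δ` orthogonally, and `ker d / ran d ≅ 𝓗`. -/
theorem stmt10 {H : Type*} [NormedAddCommGroup H] [InnerProductSpace ℂ H] [CompleteSpace H]
    (D Dδ : Submodule ℂ H) (hdense : Dense (D : Set H))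
    (d : ↥D →ₗ[ℂ] H) (δ : ↥Dδ →ₗ[ℂ] H)
    (hclosed : IsClosed {p : H × H | ∃ u : ↥D, (u : H) = p.1 ∧ d u = p.2})
    (hsub : ∀ u : ↥D, d u ∈ D)
    (hd2 : ∀ u : ↥D, d ⟨d u, hsub u⟩ = 0)
    (hadj_mem : ∀ v : H, v ∈ Dδ ↔ ∃ w : H, ∀ u : ↥D, (inner ℂ (d u) v : ℂ) = inner ℂ (u : H) w)
    (hadj : ∀ (v : ↥Dδ) (u : ↥D), (inner ℂ (d u) (v : H) : ℂ) = inner ℂ (u : H) (δ v))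
    (L : ↥(D ⊓ Dδ) →ₗ[ℂ] H)
    (hL : ∀ u : ↥(D ⊓ Dδ),
      L u = d ⟨(u : H), (Submodule.mem_inf.mp u.2).1⟩ + δ ⟨(u : H), (Submodule.mem_inf.mp u.2).2⟩)
    (hFredKer : FiniteDimensional ℂ (LinearMap.ker L))
    (hFredRan : IsClosed ((LinearMap.range L : Submodule ℂ H) : Set H))
    (hFredCoker : FiniteDimensional ℂ (H ⧸ LinearMap.range L)) :
    -- the harmonic space is ker d ∩ ker δ
    (∀ u : ↥(D ⊓ Dδ), L u = 0 ↔
      (d ⟨(u : H), (Submodule.mem_inf.mp u.2).1⟩ = 0 ∧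
       δ ⟨(u : H), (Submodule.mem_inf.mp u.2).2⟩ = 0)) ∧
    -- finite-dimensional harmonic space
    FiniteDimensional ℂ ↥((LinearMap.ker L).map (D ⊓ Dδ).subtype) ∧
    -- closed ranges
    IsClosed ((LinearMap.range d : Submodule ℂ H) : Set H) ∧
    IsClosed ((LinearMap.range δ : Submodule ℂ H) : Set H) ∧
    -- pairwise orthogonality
    ((LinearMap.ker L).map (D ⊓ Dδ).subtype ≤ (LinearMap.range d)ᗮ) ∧
    ((LinearMap.ker L).map (D ⊓ Dδ).subtype ≤ (LinearMap.range δ)ᗮ) ∧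
    (LinearMap.range d ≤ (LinearMap.range δ)ᗮ) ∧
    -- the Kodaira decomposition
    ((LinearMap.ker L).map (D ⊓ Dδ).subtype ⊔ LinearMap.range d ⊔ LinearMap.range δ = ⊤) ∧
    -- Hodge theorem: cohomology ≅ harmonic space
    Nonempty
      ((↥(Submodule.map D.subtype (LinearMap.ker d)) ⧸
          Submodule.comap (Submodule.map D.subtype (LinearMap.ker d)).subtype
            (LinearMap.range d)) ≃ₗ[ℂ]
        ↥((LinearMap.ker L).map (D ⊓ Dδ).subtype)) := by
  classical
  -- inner ℂ products of d-range and δ-range vanish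
  have hdd : ∀ (u : ↥D) (v : ↥Dδ), (inner ℂ (d u) (δ v) : ℂ) = 0 := by
    intro u v
    have h1 := hadj v ⟨d u, hsub u⟩
    rw [hd2 u] at h1
    simpa using h1.symm
  have hRd_le : LinearMap.range d ≤ (LinearMap.range δ)ᗮ := by
    rintro _ ⟨u, rfl⟩
    rw [Submodule.mem_orthogonal]
    rintro _ ⟨v, rfl⟩
    exact inner_eq_zero_symm.mp (hdd u v)
  have hRδ_le : LinearMap.range δ ≤ (LinearMap.range d)ᗮ := by
    rintro _ ⟨v, rfl⟩
    rw [Submodule.mem_orthogonal]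
    rintro _ ⟨u, rfl⟩
    exact hdd u v
  -- density
  have hdense_zero : ∀ z : H, (∀ u : ↥D, (inner ℂ (u : H) z : ℂ) = 0) → z = 0 := by
    intro z hz
    exact hdense.eq_zero_of_inner_left ℂ fun u hu => inner_eq_zero_symm.mp (hz ⟨u, hu⟩)
  -- membership in Dδ from orthogonality to range d
  have hmemDδ : ∀ x : H, x ∈ (LinearMap.range d)ᗮ → ∃ hx : x ∈ Dδ, δ ⟨x, hx⟩ = 0 := by
    intro x hx
    have h0 : ∀ u : ↥D, (inner ℂ (d u) x : ℂ) = 0 := fun u =>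
      (Submodule.mem_orthogonal _ x).1 hx (d u) ⟨u, rfl⟩
    have hmem : x ∈ Dδ := (hadj_mem x).2 ⟨0, fun u => by simp [h0 u]⟩
    refine ⟨hmem, hdense_zero _ fun u => ?_⟩
    rw [← hadj ⟨x, hmem⟩ u]
    exact h0 u
  -- membership in D from orthogonality to range δ (closedness of d)
  have hmemD : ∀ x : H, x ∈ (LinearMap.range δ)ᗮ → ∃ hx : x ∈ D, d ⟨x, hx⟩ = 0 := by
    intro x hx
    have hx' : ∀ v : ↥Dδ, (inner ℂ x (δ v) : ℂ) = 0 := fun v =>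
      inner_eq_zero_symm.mp ((Submodule.mem_orthogonal _ x).1 hx (δ v) ⟨v, rfl⟩)
    set e := WithLp.prodContinuousLinearEquiv 2 ℂ H H with he
    set G : Submodule ℂ (WithLp 2 (H × H)) :=
      (LinearMap.range (D.subtype.prod d)).comap
        (e.toLinearEquiv : WithLp 2 (H × H) →ₗ[ℂ] H × H) with hG
    have hset : ((LinearMap.range (D.subtype.prod d) : Submodule ℂ (H × H)) : Set (H × H)) =
        {p : H × H | ∃ u : ↥D, (u : H) = p.1 ∧ d u = p.2} := by
      ext p
      constructor
      · rintro ⟨u, rfl⟩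
        exact ⟨u, rfl, rfl⟩
      · rintro ⟨u, h1, h2⟩
        exact ⟨u, Prod.ext h1 h2⟩
    have hGclosed : IsClosed (G : Set (WithLp 2 (H × H))) := by
      have h1 : (G : Set (WithLp 2 (H × H))) =
          (⇑e) ⁻¹' ((LinearMap.range (D.subtype.prod d) : Submodule ℂ (H × H)) : Set (H × H)) :=
        rfl
      rw [h1, hset]
      exact hclosed.preimage e.continuous
    haveI := hGclosed.completeSpace_coe
    have hGG : Gᗮᗮ = G := Submodule.orthogonal_orthogonal G
    set x0 : WithLp 2 (H × H) := (WithLp.equiv 2 (H × H)).symm (x, 0) with hx0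
    have hx0mem : x0 ∈ Gᗮᗮ := by
      rw [Submodule.mem_orthogonal]
      intro z hz
      have hz' : ∀ u : ↥D, (inner ℂ ((u : H)) z.ofLp.1 : ℂ) + inner ℂ (d u) z.ofLp.2 = 0 := by
        intro u
        have hu : ((WithLp.equiv 2 (H × H)).symm ((u : H), d u)) ∈ G := ⟨u, rfl⟩
        have := (Submodule.mem_orthogonal G z).1 hz _ hu
        rwa [WithLp.prod_inner_apply] at this
      have hbmem : z.ofLp.2 ∈ Dδ := by
        refine (hadj_mem z.ofLp.2).2 ⟨-z.ofLp.1, fun u => ?_⟩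
        have := hz' u
        rw [inner_neg_right]
        linear_combination this
      have hδb : δ ⟨z.ofLp.2, hbmem⟩ = -z.ofLp.1 := by
        have : δ ⟨z.ofLp.2, hbmem⟩ + z.ofLp.1 = 0 := by
          apply hdense_zero
          intro u
          rw [inner_add_right, ← hadj ⟨z.ofLp.2, hbmem⟩ u]
          linear_combination hz' u
        exact eq_neg_of_add_eq_zero_left this
      rw [WithLp.prod_inner_apply]
      have h01 : (inner ℂ z.ofLp.1 x0.ofLp.1 : ℂ) = 0 := by
        have hz1 : z.ofLp.1 = -(δ ⟨z.ofLp.2, hbmem⟩) := by rw [hδb, neg_neg]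
        rw [hz1, inner_neg_left]
        have : (inner ℂ (δ (⟨z.ofLp.2, hbmem⟩ : ↥Dδ)) x : ℂ) = 0 :=
          inner_eq_zero_symm.mp (hx' _)
        simpa [hx0] using this
      have h02 : (inner ℂ z.ofLp.2 x0.ofLp.2 : ℂ) = 0 := by simp [hx0]
      rw [h01, h02, add_zero]
    rw [hGG] at hx0mem
    obtain ⟨u, hu⟩ := hx0mem
    have hu1 : (u : H) = x := congrArg Prod.fst hu
    have hu2 : d u = 0 := congrArg Prod.snd hu
    exact ⟨hu1 ▸ u.2, by rw [show (⟨x, hu1 ▸ u.2⟩ : ↥D) = u from Subtype.ext hu1.symm]; exact hu2⟩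
  -- part 1: harmonic elements
  have part1 : ∀ u : ↥(D ⊓ Dδ), L u = 0 ↔
      (d ⟨(u : H), (Submodule.mem_inf.mp u.2).1⟩ = 0 ∧
       δ ⟨(u : H), (Submodule.mem_inf.mp u.2).2⟩ = 0) := by
    intro u
    constructor
    · intro h
      rw [hL u] at h
      set a := d ⟨(u : H), (Submodule.mem_inf.mp u.2).1⟩ with ha
      set b := δ ⟨(u : H), (Submodule.mem_inf.mp u.2).2⟩ with hb
      have hab : (inner ℂ a b : ℂ) = 0 := hdd _ _
      have ha0 : a = 0 := by
        have h1 : (inner ℂ a (a + b) : ℂ) = inner ℂ a a := by rw [inner_add_right, hab, add_zero]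
        rw [h, inner_zero_right] at h1
        exact inner_self_eq_zero.mp h1.symm
      refine ⟨ha0, ?_⟩
      have : b = 0 := by rw [ha0, zero_add] at h; exact h
      exact this
    · rintro ⟨h1, h2⟩
      rw [hL u, h1, h2, add_zero]
  -- the harmonic space
  set 𝓗 := (LinearMap.ker L).map (D ⊓ Dδ).subtype with h𝓗
  have h𝓗Rd : 𝓗 ≤ (LinearMap.range d)ᗮ := by
    rintro _ ⟨u, hu, rfl⟩
    rw [Submodule.mem_orthogonal]
    rintro _ ⟨v, rfl⟩
    obtain ⟨h1, h2⟩ := (part1 u).1 (LinearMap.mem_ker.1 hu)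
    have h3 := hadj ⟨(u : H), (Submodule.mem_inf.mp u.2).2⟩ v
    rw [h2, inner_zero_right] at h3
    show (inner ℂ (d v) ((u : H)) : ℂ) = 0
    simpa using h3
  have h𝓗Rδ : 𝓗 ≤ (LinearMap.range δ)ᗮ := by
    rintro _ ⟨u, hu, rfl⟩
    rw [Submodule.mem_orthogonal]
    rintro _ ⟨v, rfl⟩
    obtain ⟨h1, h2⟩ := (part1 u).1 (LinearMap.mem_ker.1 hu)
    have h3 := hadj v ⟨(u : H), (Submodule.mem_inf.mp u.2).1⟩
    rw [h1, inner_zero_left] at h3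
    show (inner ℂ (δ v) ((u : H)) : ℂ) = 0
    rw [inner_eq_zero_symm]
    simpa using h3.symm
  have hfin𝓗 : FiniteDimensional ℂ 𝓗 := by
    have := (LinearMap.ker L).equivMapOfInjective _ (Submodule.injective_subtype (D ⊓ Dδ))
    exact LinearEquiv.finiteDimensional this
  -- closed ranges
  have hclosRd : IsClosed ((LinearMap.range d : Submodule ℂ H) : Set H) := by
    apply aux_closed_range (LinearMap.range d) (LinearMap.range L) hFredRan
    rintro y ⟨hyC, hyL⟩
    obtain ⟨u, rfl⟩ := hyL
    rw [hL u] at hyC ⊢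
    set a := d ⟨(u : H), (Submodule.mem_inf.mp u.2).1⟩ with ha
    set b := δ ⟨(u : H), (Submodule.mem_inf.mp u.2).2⟩ with hb
    have hbC : b ∈ (LinearMap.range d).topologicalClosure := by
      have : b = (a + b) - a := by abel
      rw [this]
      exact Submodule.sub_mem _ hyC
        (Submodule.le_topologicalClosure _ ⟨_, rfl⟩)
    have hbO : b ∈ (LinearMap.range d)ᗮ := hRδ_le ⟨_, rfl⟩
    have hb0 : b = 0 := by
      have hC : (LinearMap.range d).topologicalClosure = (LinearMap.range d)ᗮᗮ :=
        (Submodule.orthogonal_orthogonal_eq_closure _).symm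
      rw [hC] at hbC
      exact ((Submodule.orthogonal_disjoint (LinearMap.range d)ᗮ).le_bot ⟨hbO, hbC⟩ : _)
    rw [hb0, add_zero]
    exact ⟨_, rfl⟩
  have hclosRδ : IsClosed ((LinearMap.range δ : Submodule ℂ H) : Set H) := by
    apply aux_closed_range (LinearMap.range δ) (LinearMap.range L) hFredRan
    rintro y ⟨hyC, hyL⟩
    obtain ⟨u, rfl⟩ := hyL
    rw [hL u] at hyC ⊢
    set a := d ⟨(u : H), (Submodule.mem_inf.mp u.2).1⟩ with ha
    set b := δ ⟨(u : H), (Submodule.mem_inf.mp u.2).2⟩ with hb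
    have haC : a ∈ (LinearMap.range δ).topologicalClosure := by
      have : a = (a + b) - b := by abel
      rw [this]
      exact Submodule.sub_mem _ hyC
        (Submodule.le_topologicalClosure _ ⟨_, rfl⟩)
    have haO : a ∈ (LinearMap.range δ)ᗮ := hRd_le ⟨_, rfl⟩
    have ha0 : a = 0 := by
      have hC : (LinearMap.range δ).topologicalClosure = (LinearMap.range δ)ᗮᗮ :=
        (Submodule.orthogonal_orthogonal_eq_closure _).symm
      rw [hC] at haC
      exact ((Submodule.orthogonal_disjoint (LinearMap.range δ)ᗮ).le_bot ⟨haO, haC⟩ : _)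
    rw [ha0, zero_add]
    exact ⟨_, rfl⟩
  -- decomposition
  haveI := hclosRd.completeSpace_coe
  haveI := hclosRδ.completeSpace_coe
  have hdecomp : ∀ x : H, ∃ r a b : H, r ∈ 𝓗 ∧ a ∈ LinearMap.range d ∧
      b ∈ LinearMap.range δ ∧ x = r + a + b ∧ r ∈ (LinearMap.range δ)ᗮ := by
    intro x
    set a : H := (orthogonalProjection (LinearMap.range d) x : H) with haa
    have hax : x - a ∈ (LinearMap.range d)ᗮ := Submodule.sub_starProjection_mem_orthogonal x
    set b : H := (orthogonalProjection (LinearMap.range δ) (x - a) : H) with hbb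
    have hb : (x - a) - b ∈ (LinearMap.range δ)ᗮ := Submodule.sub_starProjection_mem_orthogonal _
    set r : H := x - a - b with hr
    have hrRd : r ∈ (LinearMap.range d)ᗮ :=
      Submodule.sub_mem _ hax (hRδ_le (SetLike.coe_mem _))
    have hrRδ : r ∈ (LinearMap.range δ)ᗮ := hb
    obtain ⟨hrD, hrd⟩ := hmemD r hrRδ
    obtain ⟨hrDδ, hrδ⟩ := hmemDδ r hrRd
    have hrmem : r ∈ D ⊓ Dδ := Submodule.mem_inf.2 ⟨hrD, hrDδ⟩
    have hrL : L ⟨r, hrmem⟩ = 0 := (part1 ⟨r, hrmem⟩).2 ⟨hrd, hrδ⟩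
    refine ⟨r, a, b, Submodule.mem_map.2 ⟨⟨r, hrmem⟩, hrL, rfl⟩,
      SetLike.coe_mem _, SetLike.coe_mem _, by rw [hr]; abel, hrRδ⟩
  have hsup : 𝓗 ⊔ LinearMap.range d ⊔ LinearMap.range δ = ⊤ := by
    rw [eq_top_iff]
    rintro x -
    obtain ⟨r, a, b, hr𝓗, haRd, hbRδ, hxe, -⟩ := hdecomp x
    rw [hxe]
    exact Submodule.add_mem _ (Submodule.add_mem _
      (Submodule.mem_sup_left (Submodule.mem_sup_left hr𝓗))
      (Submodule.mem_sup_left (Submodule.mem_sup_right haRd)))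
      (Submodule.mem_sup_right hbRδ)
  -- Hodge
  set Kd := Submodule.map D.subtype (LinearMap.ker d) with hKd
  have hKd𝓗 : 𝓗 ≤ Kd := by
    rintro _ ⟨u, hu, rfl⟩
    obtain ⟨h1, h2⟩ := (part1 u).1 (LinearMap.mem_ker.1 hu)
    exact ⟨⟨(u : H), (Submodule.mem_inf.mp u.2).1⟩, h1, rfl⟩
  have hKdRδ : ∀ x : H, x ∈ Kd → x ∈ (LinearMap.range δ)ᗮ := by
    rintro _ ⟨y, hy, rfl⟩
    rw [Submodule.mem_orthogonal]
    rintro _ ⟨v, rfl⟩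
    have h3 := hadj v y
    rw [show d y = 0 from hy, inner_zero_left] at h3
    rw [inner_eq_zero_symm]
    exact h3.symm
  haveI : FiniteDimensional ℂ ↥𝓗 := hfin𝓗
  set ψ : ↥Kd →ₗ[ℂ] ↥𝓗 :=
    ((orthogonalProjection 𝓗).toLinearMap).comp Kd.subtype with hψ
  have hψsurj : Function.Surjective ψ := by
    intro h
    refine ⟨⟨(h : H), hKd𝓗 h.2⟩, ?_⟩
    exact orthogonalProjection_mem_subspace_eq_self h
  have hψker : LinearMap.ker ψ = Submodule.comap Kd.subtype (LinearMap.range d) := by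
    ext x
    rw [LinearMap.mem_ker, Submodule.mem_comap]
    constructor
    · intro hx0
      have hxorth : (x : H) ∈ 𝓗ᗮ := by
        rw [← Submodule.orthogonalProjectionOnto_eq_zero_iff]
        exact hx0
      obtain ⟨r, a, b, hr𝓗, haRd, hbRδ, hxe, hrRδ⟩ := hdecomp (x : H)
      have hxRδ : (x : H) ∈ (LinearMap.range δ)ᗮ := hKdRδ _ x.2
      have hb0 : b = 0 := by
        have hbO : b ∈ (LinearMap.range δ)ᗮ := by
          have hbe : b = (x : H) - r - a := by rw [hxe]; abel
          rw [hbe]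
          exact Submodule.sub_mem _ (Submodule.sub_mem _ hxRδ hrRδ) (hRd_le haRd)
        exact ((Submodule.orthogonal_disjoint (LinearMap.range δ)).le_bot ⟨hbRδ, hbO⟩ : _)
      have hr0 : r = 0 := by
        have hra : r = (x : H) - a := by rw [hxe, hb0]; abel
        have hxr : (inner ℂ ((x : H)) r : ℂ) = 0 :=
          inner_eq_zero_symm.mp ((Submodule.mem_orthogonal 𝓗 ((x : H))).1 hxorth r hr𝓗)
        have har : (inner ℂ a r : ℂ) = 0 :=
          (Submodule.mem_orthogonal _ r).1 (h𝓗Rd hr𝓗) a haRd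
        have h1 : (inner ℂ r r : ℂ) = 0 := by
          calc (inner ℂ r r : ℂ) = inner ℂ ((x : H) - a) r := by rw [← hra]
            _ = inner ℂ ((x : H)) r - inner ℂ a r := by rw [inner_sub_left]
            _ = 0 := by rw [hxr, har, sub_zero]
        exact inner_self_eq_zero.mp h1
      have hxa : (x : H) = a := by rw [hxe, hr0, hb0]; abel
      show (x : H) ∈ LinearMap.range d
      rw [hxa]
      exact haRd
    · intro hx
      have hxo : (x : H) ∈ 𝓗ᗮ := aux_flip h𝓗Rd hx
      show orthogonalProjection 𝓗 (x : H) = 0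
      exact Submodule.orthogonalProjectionOnto_eq_zero_iff.2 hxo
  exact ⟨part1, hfin𝓗, hclosRd, hclosRδ, h𝓗Rd, h𝓗Rδ, hRd_le, hsup,
    ⟨(Submodule.quotEquivOfEq _ _ hψker.symm).trans (ψ.quotKerEquivOfSurjective hψsurj)⟩⟩
end
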